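/- If X⃗=x⃗ causes Y=y in (M,u⃗) according to any of the definitions of actual causation that use minimal necessity (Def 8, Def 10, with Def 3 as the direct-sufficiency case), then X⃗ is a singleton. -/
import Mathlib


open Classical

/-- A strongly recursive structural-equations (causal) model with exogenous
variables `U`, endogenous variables `V`, and values in `α`.  `rng v` is the
range `R(v)` of an endogenous variable; `F v u s` is the structural equation of
`v` evaluated in context `u` at the assignment `s` (it does not depend on
`s v`); `solve Z g u` is the unique solution of the model obtained by
intervening `Z ← g` in context `u`; `actual u` is the actual world of context
`u`; `prec` is a well-founded order witnessing strong recursivity. -/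
structure CausalModel (U V α : Type) where
  rng : V → Set α
  F : V → U → (V → α) → α
  F_rng : ∀ (v : V) (u : U) (s : V → α), F v u s ∈ rng v
  F_self : ∀ (v : V) (u : U) (s s' : V → α), (∀ w, w ≠ v → s w = s' w) → F v u s = F v u s'
  solve : Set V → (V → α) → U → V → α
  solve_mem : ∀ (Z : Set V) (g : V → α) (u : U), ∀ v ∈ Z, solve Z g u v = g v
  solve_not_mem : ∀ (Z : Set V) (g : V → α) (u : U) (v : V), v ∉ Z →
    solve Z g u v = F v u (solve Z g u)
  solve_unique : ∀ (Z : Set V) (g : V → α) (u : U) (s : V → α),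
    (∀ v ∈ Z, s v = g v) → (∀ v ∉ Z, s v = F v u s) → s = solve Z g u
  actual : U → V → α
  actual_def : ∀ (g : V → α) (u : U), solve ∅ g u = actual u
  prec : V → V → Prop
  prec_wf : WellFounded prec
  prec_dep : ∀ a b : V, (∃ (u : U) (s s' : V → α), (∀ w, s w ∈ rng w) ∧ (∀ w, s' w ∈ rng w) ∧
    (∀ w, w ≠ a → s w = s' w) ∧ F b u s ≠ F b u s') → prec a b

namespace CausalModel

variable {U V α : Type}

/-- The assignment that is `x` on `X` and `g` elsewhere. -/
noncomputable def merge (X : Set V) (x g : V → α) : V → α :=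
  fun v => if v ∈ X then x v else g v

/-- `g` is a valid setting: every variable gets a value in its range. -/
def Setting (M : CausalModel U V α) (g : V → α) : Prop := ∀ v, g v ∈ M.rng v

/-- `X⃗=x⃗` is directly sufficient for `Y⃗=y⃗`: in every context, intervening
`X⃗ ← x⃗` together with arbitrary (in-range) values for all remaining variables
`C⃗ = V ∖ (X⃗ ∪ Y⃗)` yields `Y⃗ = y⃗`. -/
def directlySuff (M : CausalModel U V α) (X : Set V) (x : V → α) (Y : Set V) (y : V → α) : Prop :=
  ∀ g : V → α, M.Setting g → (∀ v ∈ X, g v = x v) →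
    ∀ u : U, ∀ v ∈ Y, M.solve (X ∪ (X ∪ Y)ᶜ) g u v = y v

/-- Actual direct sufficiency: as `directlySuff` but only in the given context `u`. -/
def actDirectlySuff (M : CausalModel U V α) (u : U) (X : Set V) (x : V → α)
    (Y : Set V) (y : V → α) : Prop :=
  ∀ g : V → α, M.Setting g → (∀ v ∈ X, g v = x v) →
    ∀ v ∈ Y, M.solve (X ∪ (X ∪ Y)ᶜ) g u v = y v

/-- `X⃗=x⃗` is weakly sufficient for `Y⃗=y⃗`: in every context, `[X⃗ ← x⃗] Y⃗=y⃗`. -/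
def weaklySuff (M : CausalModel U V α) (X : Set V) (x : V → α) (Y : Set V) (y : V → α) : Prop :=
  ∀ u : U, ∀ v ∈ Y, M.solve X x u v = y v

/-- Actual weak sufficiency in context `u`: `(M,u) ⊨ [X⃗ ← x⃗] Y⃗=y⃗`. -/
def actWeaklySuff (M : CausalModel U V α) (u : U) (X : Set V) (x : V → α)
    (Y : Set V) (y : V → α) : Prop :=
  ∀ v ∈ Y, M.solve X x u v = y v

/-- `X⃗=x⃗` is strongly sufficient for `Y⃗=y⃗`: it is directly sufficient for some
superset `N⃗ ⊇ Y⃗` with values extending `y⃗`. -/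
def stronglySuff (M : CausalModel U V α) (X : Set V) (x : V → α) (Y : Set V) (y : V → α) : Prop :=
  ∃ (N : Set V) (n : V → α), Y ⊆ N ∧ (∀ v ∈ Y, n v = y v) ∧ M.directlySuff X x N n

/-- Actual strong sufficiency of `X⃗=x⃗` for the single effect `Y0 = y` along the
network `N` in context `u`. -/
def actStronglySuffNet (M : CausalModel U V α) (u : U) (X : Set V) (x : V → α)
    (Y0 : V) (y : α) (N : Set V) : Prop :=
  ∃ n : V → α, Y0 ∈ N ∧ n Y0 = y ∧ M.actDirectlySuff u X x N n

/-- `a` is a parent of `b`: the equation of `b` depends on the value of `a`. -/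
def IsParent (M : CausalModel U V α) (a b : V) : Prop :=
  ∃ (u : U) (s s' : V → α), M.Setting s ∧ M.Setting s' ∧
    (∀ w, w ≠ a → s w = s' w) ∧ M.F b u s ≠ M.F b u s'

/-- `a` is only a parent of `b`: the single edge `a → b` is the only directed
path from `a` to `b`. -/
def OnlyParent (M : CausalModel U V α) (a b : V) : Prop :=
  M.IsParent a b ∧ ¬ ∃ z, M.IsParent a z ∧ Relation.TransGen M.IsParent z b

/-- `R` is the set of root variables: equations of members of `R` depend only on
the context, and equations of all other variables do not depend on the context
(exogenous variables appear only in equations of the form `V = U`). -/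
def IsRootSet (M : CausalModel U V α) (R : Set V) : Prop :=
  (∀ v ∈ R, ∀ (u : U) (s s' : V → α), M.F v u s = M.F v u s') ∧
  (∀ v ∉ R, ∀ (u u' : U) (s : V → α), M.F v u s = M.F v u' s)

/-- Def 2: contrastive necessity with actual strong sufficiency (AC1, AC2, AC3). -/
def CauseDef2 (M : CausalModel U V α) (u : U) (X : Set V) (x : V → α) (Y0 : V) (y : α) : Prop :=
  (∀ v ∈ X, M.actual u v = x v) ∧ M.actual u Y0 = y ∧
  (∃ (W N : Set V) (x' : V → α), Disjoint W (X ∪ {Y0}) ∧ (∀ v ∈ X, x' v ∈ M.rng v) ∧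
      M.actStronglySuffNet u (X ∪ W) (merge X x (M.actual u)) Y0 y N ∧
      ∀ S ⊆ N, ¬ M.actStronglySuffNet u (X ∪ W) (merge X x' (M.actual u)) Y0 y S) ∧
  (∀ X' ⊂ X, ¬ ∃ (W N : Set V) (x' : V → α), Disjoint W (X' ∪ {Y0}) ∧
      (∀ v ∈ X', x' v ∈ M.rng v) ∧
      M.actStronglySuffNet u (X' ∪ W) (merge X' x (M.actual u)) Y0 y N ∧
      ∀ S ⊆ N, ¬ M.actStronglySuffNet u (X' ∪ W) (merge X' x' (M.actual u)) Y0 y S)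

/-- Def 3: contrastive necessity with actual direct sufficiency (AC1, AC2, AC3). -/
def CauseDef3 (M : CausalModel U V α) (u : U) (X : Set V) (x : V → α) (Y0 : V) (y : α) : Prop :=
  (∀ v ∈ X, M.actual u v = x v) ∧ M.actual u Y0 = y ∧
  (∃ (W : Set V) (x' : V → α), Disjoint W (X ∪ {Y0}) ∧ (∀ v ∈ X, x' v ∈ M.rng v) ∧
      M.actDirectlySuff u (X ∪ W) (merge X x (M.actual u)) {Y0} (fun _ => y) ∧
      ¬ M.actDirectlySuff u (X ∪ W) (merge X x' (M.actual u)) {Y0} (fun _ => y)) ∧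
  (∀ X' ⊂ X, ¬ ∃ (W : Set V) (x' : V → α), Disjoint W (X' ∪ {Y0}) ∧
      (∀ v ∈ X', x' v ∈ M.rng v) ∧
      M.actDirectlySuff u (X' ∪ W) (merge X' x (M.actual u)) {Y0} (fun _ => y) ∧
      ¬ M.actDirectlySuff u (X' ∪ W) (merge X' x' (M.actual u)) {Y0} (fun _ => y))

/-- Def 4 (singleton cause): contrastive necessity with non-actual weak sufficiency. -/
def CauseDef4 (M : CausalModel U V α) (u : U) (X0 : V) (x0 : α) (Y0 : V) (y : α) : Prop :=
  M.actual u X0 = x0 ∧ M.actual u Y0 = y ∧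
  ∃ (W : Set V) (x' : α), Disjoint W ({X0} ∪ {Y0} : Set V) ∧ x' ∈ M.rng X0 ∧
    M.weaklySuff ({X0} ∪ W) (merge {X0} (fun _ => x0) (M.actual u)) {Y0} (fun _ => y) ∧
    ¬ M.weaklySuff ({X0} ∪ W) (merge {X0} (fun _ => x') (M.actual u)) {Y0} (fun _ => y)

/-- Def 8 (singleton cause): minimal necessity with actual strong sufficiency
(minimality AC3 is automatic for singletons). -/
def CauseDef8 (M : CausalModel U V α) (u : U) (X0 : V) (x0 : α) (Y0 : V) (y : α) : Prop :=
  M.actual u X0 = x0 ∧ M.actual u Y0 = y ∧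
  ∃ W N : Set V, Disjoint W ({X0} ∪ {Y0} : Set V) ∧
    M.actStronglySuffNet u ({X0} ∪ W) (merge {X0} (fun _ => x0) (M.actual u)) Y0 y N ∧
    ∀ S ⊆ N, ¬ M.actStronglySuffNet u W (M.actual u) Y0 y S

/-- Def 10 (singleton cause): minimal necessity with non-actual weak sufficiency. -/
def CauseDef10 (M : CausalModel U V α) (u : U) (X0 : V) (x0 : α) (Y0 : V) (y : α) : Prop :=
  M.actual u X0 = x0 ∧ M.actual u Y0 = y ∧
  ∃ W : Set V, Disjoint W ({X0} ∪ {Y0} : Set V) ∧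
    M.weaklySuff ({X0} ∪ W) (merge {X0} (fun _ => x0) (M.actual u)) {Y0} (fun _ => y) ∧
    ¬ M.weaklySuff W (M.actual u) {Y0} (fun _ => y)

end CausalModel

namespace CausalModel

/-- The general scheme of actual causation with *minimal* necessity, relative
to an abstract sufficiency notion `suff Z⃗ z⃗ S⃗` ("`Z⃗=z⃗` is sufficient for the
effect along the network `S⃗`"): AC1, AC2(b) (witness `W⃗` at actual values and
network `N⃗`), AC2(aᵐ) (for all `S⃗ ⊆ N⃗`, the witness alone is not sufficient
along `S⃗`), and AC3 (minimality). -/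
def CauseMin {U V α : Type} (M : CausalModel U V α) (u : U)
    (suff : Set V → (V → α) → Set V → Prop) (X : Set V) (x : V → α) (Y0 : V) : Prop :=
  (∀ v ∈ X, M.actual u v = x v) ∧
  (∃ W N : Set V, Disjoint W (X ∪ {Y0}) ∧
      suff (X ∪ W) (merge X x (M.actual u)) N ∧
      ∀ S ⊆ N, ¬ suff W (M.actual u) S) ∧
  (∀ X' ⊂ X, ¬ ∃ W N : Set V, Disjoint W (X' ∪ {Y0}) ∧
      suff (X' ∪ W) (merge X' x (M.actual u)) N ∧
      ∀ S ⊆ N, ¬ suff W (M.actual u) S)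

theorem causeMin_singleton {U V α : Type} (M : CausalModel U V α)
    (u : U) (suff : Set V → (V → α) → Set V → Prop) (X : Set V) (x : V → α) (Y0 : V)
    (hne : X.Nonempty) (hYX : Y0 ∉ X)
    (h : CauseMin M u suff X x Y0) : ∃ X0, X = {X0} := by
  obtain ⟨h1, ⟨W, N, hdisj, hsuff, hmin⟩, h3⟩ := h
  obtain ⟨X0, hX0⟩ := hne
  by_contra hns
  push_neg at hns
  -- X \ {X0} is nonempty
  have hX2 : ∃ X1 ∈ X, X1 ≠ X0 := by
    by_contra hc
    push_neg at hc
    exact hns X0 (Set.eq_singleton_iff_unique_mem.mpr ⟨hX0, hc⟩)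
  obtain ⟨X1, hX1, hX1ne⟩ := hX2
  -- merges at actual values collapse to the actual world
  have hm : ∀ Z ⊆ X, merge Z x (M.actual u) = M.actual u := by
    intro Z hZ
    funext v
    unfold merge
    split_ifs with hv
    · exact (h1 v (hZ hv)).symm
    · rfl
  by_cases hS : ∃ S ⊆ N, suff (W ∪ (X \ {X0})) (M.actual u) S
  · -- move {X0} into the witness? no: the *part* X\{X0} together with W is sufficient,
    -- so X \ {X0} satisfies AC2 with witness W, contradicting AC3
    obtain ⟨S, hSN, hsufS⟩ := hS
    refine h3 (X \ {X0}) ⟨Set.diff_subset, fun hsub => ?_⟩ ?_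
    · exact (hsub hX0).2 rfl
    · refine ⟨W, S, ?_, ?_, ?_⟩
      · exact hdisj.mono_right (Set.union_subset_union_left _ Set.diff_subset)
      · rw [hm _ Set.diff_subset, Set.union_comm]
        exact hsufS
      · intro S' hS' hc
        exact hmin S' (hS'.trans hSN) hc
  · -- move X \ {X0} into the witness: {X0} satisfies AC2 with witness W ∪ (X \ {X0})
    push_neg at hS
    refine h3 {X0} ⟨Set.singleton_subset_iff.mpr hX0, fun hsub => hX1ne (hsub hX1)⟩ ?_
    refine ⟨W ∪ (X \ {X0}), N, ?_, ?_, hS⟩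
    · refine Set.disjoint_union_left.mpr ⟨?_, ?_⟩
      · exact hdisj.mono_right
          (Set.union_subset_union_left _ (Set.singleton_subset_iff.mpr hX0))
      · refine Set.disjoint_left.mpr fun v hv hv' => ?_
        rcases hv' with hv' | hv'
        · exact hv.2 hv'
        · exact hYX (hv' ▸ hv.1)
    · have hset : ({X0} : Set V) ∪ (W ∪ (X \ {X0})) = X ∪ W := by
        ext v
        simp only [Set.mem_union, Set.mem_singleton_iff, Set.mem_diff]
        constructor
        · rintro (rfl | hv | ⟨hv, _⟩)
          · exact Or.inl hX0
          · exact Or.inr hv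
          · exact Or.inl hv
        · rintro (hv | hv)
          · by_cases hv0 : v = X0
            · exact Or.inl hv0
            · exact Or.inr (Or.inr ⟨hv, hv0⟩)
          · exact Or.inr (Or.inl hv)
      rw [hm {X0} (Set.singleton_subset_iff.mpr hX0), hset,
        ← hm X subset_rfl]
      exact hsuff

/-- any cause according to a definition using minimal necessity
(Def 3/9: actual direct sufficiency; Def 10: weak sufficiency; Def 8: actual
strong sufficiency) is a singleton. -/
theorem minimal_necessity_singleton {U V α : Type} (M : CausalModel U V α)
    (u : U) (X : Set V) (x : V → α) (Y0 : V) (y : α)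
    (hne : X.Nonempty) (hYX : Y0 ∉ X) :
    (CauseMin M u (fun Z z S => S = {Y0} ∧ M.actDirectlySuff u Z z {Y0} (fun _ => y)) X x Y0 →
        ∃ X0, X = {X0}) ∧
    (CauseMin M u (fun Z z S => S = {Y0} ∧ M.weaklySuff Z z {Y0} (fun _ => y)) X x Y0 →
        ∃ X0, X = {X0}) ∧
    (CauseMin M u (fun Z z S => M.actStronglySuffNet u Z z Y0 y S) X x Y0 →
        ∃ X0, X = {X0}) :=
  ⟨fun h => causeMin_singleton M u _ X x Y0 hne hYX h,
   fun h => causeMin_singleton M u _ X x Y0 hne hYX h,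
   fun h => causeMin_singleton M u _ X x Y0 hne hYX h⟩

end CausalModel
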